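/- Let α be irrational, N ≥ 2, and set M = first(N) + last(N). Then first(N) = first(M), i.e., for all m with 0 < m < M, {first(N)·α} ≤ {m·α}. -/

import Mathlib

lemma fract_ne_of_ne (α : ℝ) (hα : Irrational α) {p q : ℕ} (hpq : p ≠ q) :
    Int.fract (p * α) ≠ Int.fract (q * α) := by
  intro h
  obtain ⟨z, hz⟩ := Int.fract_eq_fract.mp h
  have hk : ((p : ℤ) - q) ≠ 0 := by
    simpa [sub_eq_zero] using hpq
  have hirr : Irrational (((p : ℤ) - q : ℤ) * α) := hα.intCast_mul hk
  have : (((p : ℤ) - q : ℤ) : ℝ) * α = (z : ℝ) := by push_cast; push_cast at hz; linarith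
  exact hirr ⟨(z : ℚ), by push_cast; linarith [this]⟩

lemma fract_sub_of_lt {x y : ℝ} (h : Int.fract x < Int.fract y) :
    Int.fract (x - y) = Int.fract x - Int.fract y + 1 := by
  have hx0 := Int.fract_nonneg x
  have hx1 := Int.fract_lt_one x
  have hy0 := Int.fract_nonneg y
  have hy1 := Int.fract_lt_one y
  have h1 : x - y = (Int.fract x - Int.fract y + 1) + ((⌊x⌋ - ⌊y⌋ - 1 : ℤ) : ℝ) := by
    simp only [Int.fract]; push_cast; ring
  rw [h1, Int.fract_add_intCast, Int.fract_eq_self.mpr ⟨by linarith, by linarith⟩]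

theorem first_N_eq_first_M (α : ℝ) (hα : Irrational α) (N : ℕ) (hN : 2 ≤ N)
    (f l : ℕ) (hf0 : 0 < f) (hfN : f < N)
    (hf : ∀ m : ℕ, 0 < m → m < N → Int.fract (f * α) ≤ Int.fract (m * α))
    (hl0 : 0 < l) (hlN : l < N)
    (hl : ∀ m : ℕ, 0 < m → m < N → Int.fract (m * α) ≤ Int.fract (l * α)) :
    ∀ m : ℕ, 0 < m → m < f + l → Int.fract (f * α) ≤ Int.fract (m * α) := by
  intro m hm0 hmM
  by_cases hmN : m < N
  · exact hf m hm0 hmN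
  push_neg at hmN
  by_contra hcon
  push_neg at hcon
  -- hcon : fract (m α) < fract (f α)
  have hab : Int.fract (f * α) ≤ Int.fract (l * α) := hl f hf0 hfN
  have hxb : Int.fract ((m : ℝ) * α) < Int.fract ((l : ℝ) * α) := lt_of_lt_of_le hcon hab
  have hfm : f < m := lt_of_lt_of_le hfN hmN
  have hlm : l < m := lt_of_lt_of_le hlN hmN
  have hmf_lt : m - f < l := by omega
  have hmf_pos : 0 < m - f := by omega
  have hml_lt : m - l < f := by omega
  have hml_pos : 0 < m - l := by omega
  have hc1 : ((m - f : ℕ) : ℝ) * α = (m : ℝ) * α - (f : ℝ) * α := by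
    push_cast [Nat.cast_sub hfm.le]; ring
  have hc2 : ((m - l : ℕ) : ℝ) * α = (m : ℝ) * α - (l : ℝ) * α := by
    push_cast [Nat.cast_sub hlm.le]; ring
  have e1 : Int.fract (((m - f : ℕ) : ℝ) * α)
      = Int.fract ((m : ℝ) * α) - Int.fract ((f : ℝ) * α) + 1 := by
    rw [hc1]; exact fract_sub_of_lt hcon
  have e2 : Int.fract (((m - l : ℕ) : ℝ) * α)
      = Int.fract ((m : ℝ) * α) - Int.fract ((l : ℝ) * α) + 1 := by
    rw [hc2]; exact fract_sub_of_lt hxb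
  have b1 : Int.fract (((m - f : ℕ) : ℝ) * α) ≤ Int.fract ((l : ℝ) * α) :=
    hl (m - f) hmf_pos (lt_trans hmf_lt hlN)
  have b2 : Int.fract ((f : ℝ) * α) ≤ Int.fract (((m - l : ℕ) : ℝ) * α) :=
    hf (m - l) hml_pos (lt_trans hml_lt hfN)
  -- From b1, e1: x ≤ a + b - 1; from b2, e2: x ≥ a + b - 1; so equality,
  -- and then fract ((m-f) α) = fract (l α), contradicting irrationality.
  have : Int.fract (((m - f : ℕ) : ℝ) * α) = Int.fract ((l : ℝ) * α) := by
    rw [e1] at b1 ⊢; rw [e2] at b2; linarith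
  exact fract_ne_of_ne α hα (by omega : m - f ≠ l) this
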